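/- Let k > 0, h > 0 with 2k²h < 1, ω(x) = (1/(2k))e^{−k|x|}, a = −ln(1−2k²h)/(2k), and u(x) = ∫_{−a}^a ω(x−y) dy. Then u(x) > h for |x| < a and u(x) < h for |x| > a, i.e., u is an (h; −a, a)-bump. -/

import Mathlib

open intervalIntegral

set_option maxHeartbeats 1000000 in
theorem stmt_13 (k h : ℝ) (hk : 0 < k) (hh : 0 < h) (hkh : 2 * k ^ 2 * h < 1)
    (ω u : ℝ → ℝ)
    (hω : ∀ x, ω x = (1 / (2 * k)) * Real.exp (-k * |x|))
    (a : ℝ) (ha : a = -Real.log (1 - 2 * k ^ 2 * h) / (2 * k))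
    (hu : ∀ x, u x = ∫ y in (-a)..a, ω (x - y)) :
    (∀ x : ℝ, |x| < a → h < u x) ∧ (∀ x : ℝ, a < |x| → u x < h) := by
  have hk2 : (0:ℝ) < 2 * k ^ 2 := by positivity
  have hk0 : k ≠ 0 := ne_of_gt hk
  have hpos : 0 < 1 - 2 * k ^ 2 * h := by linarith
  have hexp : Real.exp (-(2 * k * a)) = 1 - 2 * k ^ 2 * h := by
    have : -(2 * k * a) = Real.log (1 - 2 * k ^ 2 * h) := by
      rw [ha]; field_simp
    rw [this, Real.exp_log hpos]
  have h2 : 2 * k ^ 2 * h = 1 - Real.exp (-(2 * k * a)) := by linarith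
  have hA : 0 < a := by
    have h1 : Real.exp (-(2 * k * a)) < 1 := by
      rw [hexp]; nlinarith
    have := Real.exp_lt_one_iff.mp h1
    nlinarith
  -- antiderivative
  set W : ℝ → ℝ := fun t => (1 / (2 * k ^ 2)) *
      (if t ≤ 0 then Real.exp (k * t) else 2 - Real.exp (-(k * t))) with hW
  have hg1 : ∀ t : ℝ, HasDerivAt (fun s => (1 / (2 * k ^ 2)) * Real.exp (k * s))
      ((1 / (2 * k)) * Real.exp (k * t)) t := by
    intro t
    have h0 : HasDerivAt (fun s : ℝ => k * s) k t := by
      simpa using (hasDerivAt_id t).const_mul k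
    have := (h0.exp).const_mul (1 / (2 * k ^ 2))
    refine this.congr_deriv ?_
    field_simp
  have hg2 : ∀ t : ℝ, HasDerivAt (fun s => (1 / (2 * k ^ 2)) * (2 - Real.exp (-(k * s))))
      ((1 / (2 * k)) * Real.exp (-(k * t))) t := by
    intro t
    have h0 : HasDerivAt (fun s : ℝ => -(k * s)) (-k) t := by
      exact (by simpa using ((hasDerivAt_id t).const_mul k).neg : HasDerivAt (-fun s : ℝ => k * s) (-k) t)
    have := ((h0.exp).const_sub 2).const_mul (1 / (2 * k ^ 2))
    refine this.congr_deriv ?_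
    field_simp
  have hω1 : ∀ t : ℝ, t ≤ 0 → ω t = (1 / (2 * k)) * Real.exp (k * t) := by
    intro t ht; rw [hω, abs_of_nonpos ht]; ring_nf
  have hω2 : ∀ t : ℝ, 0 ≤ t → ω t = (1 / (2 * k)) * Real.exp (-(k * t)) := by
    intro t ht; rw [hω, abs_of_nonneg ht]; ring_nf
  have hderiv : ∀ t : ℝ, HasDerivAt W (ω t) t := by
    intro t
    rcases lt_trichotomy t 0 with ht | ht | ht
    · have heq : W =ᶠ[nhds t] (fun s => (1 / (2 * k ^ 2)) * Real.exp (k * s)) := by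
        filter_upwards [Iio_mem_nhds ht] with s hs
        rw [Set.mem_Iio] at hs
        simp only [hW]; rw [if_pos hs.le]
      rw [hω1 t ht.le]
      exact (hg1 t).congr_of_eventuallyEq heq
    · subst ht
      have hω0 : ω 0 = (1 / (2 * k)) * Real.exp (k * 0) := hω1 0 le_rfl
      have hω0' : ω 0 = (1 / (2 * k)) * Real.exp (-(k * 0)) := hω2 0 le_rfl
      have hd1 : HasDerivWithinAt W (ω 0) (Set.Iic 0) 0 := by
        rw [hω0]
        refine ((hg1 0).hasDerivWithinAt).congr ?_ ?_
        · intro s hs; rw [Set.mem_Iic] at hs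
          simp only [hW]; rw [if_pos hs]
        · simp only [hW]; rw [if_pos le_rfl]
      have hd2 : HasDerivWithinAt W (ω 0) (Set.Ici 0) 0 := by
        rw [hω0']
        refine ((hg2 0).hasDerivWithinAt).congr ?_ ?_
        · intro s hs; rw [Set.mem_Ici] at hs
          rcases eq_or_lt_of_le hs with h | h
          · simp only [hW, ← h]; norm_num
          · simp only [hW]; rw [if_neg (not_le.mpr h)]
        · simp only [hW]; rw [if_pos le_rfl]; norm_num
      have hun := hd1.union hd2
      rw [Set.Iic_union_Ici] at hun
      exact hasDerivWithinAt_univ.mp hun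
    · have heq : W =ᶠ[nhds t] (fun s => (1 / (2 * k ^ 2)) * (2 - Real.exp (-(k * s)))) := by
        filter_upwards [Ioi_mem_nhds ht] with s hs
        rw [Set.mem_Ioi] at hs
        simp only [hW]; rw [if_neg (not_le.mpr hs)]
      rw [hω2 t ht.le]
      exact (hg2 t).congr_of_eventuallyEq heq
  have hcont : Continuous ω := by
    have : ω = fun x => (1 / (2 * k)) * Real.exp (-k * |x|) := funext hω
    rw [this]; fun_prop
  have huW : ∀ x : ℝ, u x = W (x + a) - W (x - a) := by
    intro x
    rw [hu x, intervalIntegral.integral_comp_sub_left ω x]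
    have : x - -a = x + a := by ring
    rw [this]
    exact intervalIntegral.integral_eq_sub_of_hasDerivAt (fun t _ => hderiv t)
      ((hcont.intervalIntegrable _ _))
  have hEE' : Real.exp (-(k * a)) * Real.exp (k * a) = 1 := by
    rw [← Real.exp_add]; simp
  have hE2 : Real.exp (-(2 * k * a)) = Real.exp (-(k * a)) * Real.exp (-(k * a)) := by
    rw [← Real.exp_add]; ring_nf
  have hEpos := Real.exp_pos (-(k * a))
  have hE'pos := Real.exp_pos (k * a)
  have hmul : h * (2 * k ^ 2) = 1 - Real.exp (-(k * a)) * Real.exp (-(k * a)) := by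
    rw [← hE2]; linarith [h2]
  constructor
  · intro x hx
    have habs := hx
    rw [abs_lt] at hx
    obtain ⟨hx1, hx2⟩ := hx
    rw [huW x]
    have hc1 : ¬ (x + a ≤ 0) := by push_neg; linarith
    have hc2 : x - a ≤ 0 := by linarith
    simp only [hW]
    rw [if_neg hc1, if_pos hc2]
    have hcosh : Real.cosh (k * x) < Real.cosh (k * a) := by
      rw [Real.cosh_lt_cosh, abs_of_pos (by positivity : 0 < k * a), abs_mul,
        abs_of_pos hk]
      exact (mul_lt_mul_iff_right₀ hk).mpr habs
    rw [Real.cosh_eq, Real.cosh_eq] at hcosh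
    have e1 : Real.exp (-(k * (x + a))) = Real.exp (-(k * x)) * Real.exp (-(k * a)) := by
      rw [← Real.exp_add]; ring_nf
    have e2 : Real.exp (k * (x - a)) = Real.exp (k * x) * Real.exp (-(k * a)) := by
      rw [← Real.exp_add]; ring_nf
    rw [e1, e2]
    have hstep : 0 < Real.exp (-(k * a)) *
        (Real.exp (k * a) + Real.exp (-(k * a)) - Real.exp (k * x) - Real.exp (-(k * x))) :=
      mul_pos hEpos (by linarith)
    have expr : (1 / (2 * k ^ 2)) * (2 - Real.exp (-(k * x)) * Real.exp (-(k * a)))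
        - (1 / (2 * k ^ 2)) * (Real.exp (k * x) * Real.exp (-(k * a)))
        = (2 - Real.exp (-(k * x)) * Real.exp (-(k * a))
            - Real.exp (k * x) * Real.exp (-(k * a))) / (2 * k ^ 2) := by ring
    rw [expr, lt_div_iff₀ hk2, hmul]
    nlinarith [hstep, hEE']
  · intro x hx
    rw [huW x]
    rcases lt_abs.mp hx with hxa | hxa
    · have hc1 : ¬ (x + a ≤ 0) := by push_neg; linarith
      have hc2 : ¬ (x - a ≤ 0) := by push_neg; linarith
      simp only [hW]
      rw [if_neg hc1, if_neg hc2]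
      have e1 : Real.exp (-(k * (x + a))) = Real.exp (-(k * x)) * Real.exp (-(k * a)) := by
        rw [← Real.exp_add]; ring_nf
      have e2 : Real.exp (-(k * (x - a))) = Real.exp (-(k * x)) * Real.exp (k * a) := by
        rw [← Real.exp_add]; ring_nf
      rw [e1, e2]
      have hQ : Real.exp (-(k * x)) < Real.exp (-(k * a)) := by
        apply Real.exp_lt_exp.mpr; nlinarith [(mul_lt_mul_iff_right₀ hk).mpr hxa]
      have hE' : Real.exp (-(k * a)) < Real.exp (k * a) := by
        apply Real.exp_lt_exp.mpr; nlinarith [mul_pos hk hA]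
      have expr : (1 / (2 * k ^ 2)) * (2 - Real.exp (-(k * x)) * Real.exp (-(k * a)))
          - (1 / (2 * k ^ 2)) * (2 - Real.exp (-(k * x)) * Real.exp (k * a))
          = (Real.exp (-(k * x)) * Real.exp (k * a)
              - Real.exp (-(k * x)) * Real.exp (-(k * a))) / (2 * k ^ 2) := by ring
      rw [expr, div_lt_iff₀ hk2, hmul]
      nlinarith [hEE', mul_lt_mul_of_pos_right hQ
        (sub_pos.mpr hE' : 0 < Real.exp (k * a) - Real.exp (-(k * a)))]
    · have hc1 : x + a ≤ 0 := by linarith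
      have hc2 : x - a ≤ 0 := by linarith
      simp only [hW]
      rw [if_pos hc1, if_pos hc2]
      have e1 : Real.exp (k * (x + a)) = Real.exp (k * x) * Real.exp (k * a) := by
        rw [← Real.exp_add]; ring_nf
      have e2 : Real.exp (k * (x - a)) = Real.exp (k * x) * Real.exp (-(k * a)) := by
        rw [← Real.exp_add]; ring_nf
      rw [e1, e2]
      have hP : Real.exp (k * x) < Real.exp (-(k * a)) := by
        apply Real.exp_lt_exp.mpr; nlinarith [(mul_lt_mul_iff_right₀ hk).mpr hxa]
      have hE' : Real.exp (-(k * a)) < Real.exp (k * a) := by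
        apply Real.exp_lt_exp.mpr; nlinarith [mul_pos hk hA]
      have expr : (1 / (2 * k ^ 2)) * (Real.exp (k * x) * Real.exp (k * a))
          - (1 / (2 * k ^ 2)) * (Real.exp (k * x) * Real.exp (-(k * a)))
          = (Real.exp (k * x) * Real.exp (k * a)
              - Real.exp (k * x) * Real.exp (-(k * a))) / (2 * k ^ 2) := by ring
      rw [expr, div_lt_iff₀ hk2, hmul]
      nlinarith [hEE', mul_lt_mul_of_pos_right hP
        (sub_pos.mpr hE' : 0 < Real.exp (k * a) - Real.exp (-(k * a)))]
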